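/- Let 1 ≤ t < p < ∞, d ≥ 1, r > 0, c_p ≥ 1 and c_t > 0. Let x, z, q ∈ ℝ^d satisfy ‖z − x‖_p ≤ 2rc_p and ‖q − x‖_p ≤ 2rc_p. Let M : ℝ^d → ℝ^d be the Mazur map M_{p,t} scaled down by the factor (p/t)·(2rc_p)^{p/t−1}, i.e., M(u)_i = (t/p)·(2rc_p)^{1−p/t}·sign(u_i)·|u_i|^{p/t}. If ‖M(z − x) − M(q − x)‖_t ≤ c_t·r, then ‖z − q‖_p ≤ (p/t)^{t/p}·c_t^{t/p}·(4c_p)^{1−t/p}·r. -/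
import Mathlib


noncomputable section

lemma aux_superadd {a b s : ℝ} (ha : 0 ≤ a) (hb : 0 ≤ b) (hs : 1 ≤ s) :
    a ^ s + b ^ s ≤ (a + b) ^ s := by
  have h := NNReal.coe_le_coe.mpr (NNReal.add_rpow_le_rpow_add a.toNNReal b.toNNReal hs)
  simpa [NNReal.coe_rpow, Real.coe_toNNReal a ha, Real.coe_toNNReal b hb,
    Real.toNNReal_add ha hb] using h

lemma aux_convex {a b s : ℝ} (ha : 0 ≤ a) (hb : 0 ≤ b) (hs : 1 ≤ s) :
    (a + b) ^ s ≤ 2 ^ (s - 1) * (a ^ s + b ^ s) := by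
  have h := NNReal.coe_le_coe.mpr (NNReal.rpow_add_le_mul_rpow_add_rpow a.toNNReal b.toNNReal hs)
  simpa [NNReal.coe_rpow, Real.coe_toNNReal a ha, Real.coe_toNNReal b hb,
    Real.toNNReal_add ha hb] using h

lemma phi_of_nonneg {s x : ℝ} (hs : 0 < s) (hx : 0 ≤ x) :
    Real.sign x * |x| ^ s = x ^ s := by
  rcases eq_or_lt_of_le hx with h | h
  · simp [← h, Real.sign_zero, Real.zero_rpow hs.ne']
  · rw [Real.sign_of_pos h, abs_of_pos h, one_mul]

lemma phi_of_nonpos {s x : ℝ} (hs : 0 < s) (hx : x ≤ 0) :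
    Real.sign x * |x| ^ s = -((-x) ^ s) := by
  rcases eq_or_lt_of_le hx with h | h
  · simp [h, Real.sign_zero, Real.zero_rpow hs.ne']
  · rw [Real.sign_of_neg h, abs_of_neg h, neg_one_mul]

lemma mazur_pointwise_le {s a b : ℝ} (hs : 1 ≤ s) (hba : b ≤ a) :
    |a - b| ^ s ≤ 2 ^ (s - 1) * |Real.sign a * |a| ^ s - Real.sign b * |b| ^ s| := by
  have hs0 : (0:ℝ) < s := lt_of_lt_of_le one_pos hs
  have h2 : (1:ℝ) ≤ 2 ^ (s - 1) := Real.one_le_rpow one_le_two (by linarith)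
  rw [abs_of_nonneg (sub_nonneg.mpr hba)]
  rcases le_total 0 b with hb | hb
  · have ha : 0 ≤ a := le_trans hb hba
    rw [phi_of_nonneg hs0 ha, phi_of_nonneg hs0 hb,
      abs_of_nonneg (sub_nonneg.mpr (Real.rpow_le_rpow hb hba hs0.le))]
    have h1 : (a - b) ^ s + b ^ s ≤ a ^ s := by
      have := aux_superadd (sub_nonneg.mpr hba) hb hs
      simpa [sub_add_cancel] using this
    nlinarith [Real.rpow_nonneg (sub_nonneg.mpr hba) s]
  · rcases le_total 0 a with ha | ha
    · rw [phi_of_nonneg hs0 ha, phi_of_nonpos hs0 hb, sub_neg_eq_add,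
        abs_of_nonneg (add_nonneg (Real.rpow_nonneg ha s) (Real.rpow_nonneg (neg_nonneg.mpr hb) s))]
      have := aux_convex ha (neg_nonneg.mpr hb) hs
      simpa [sub_eq_add_neg] using this
    · have hba' : -a ≤ -b := neg_le_neg hba
      rw [phi_of_nonpos hs0 ha, phi_of_nonpos hs0 hb]
      have hle := Real.rpow_le_rpow (neg_nonneg.mpr ha) hba' hs0.le
      have habs : |-((-a)^s) - -((-b)^s)| = (-b) ^ s - (-a) ^ s := by
        rw [show -((-a)^s) - -((-b)^s) = (-b) ^ s - (-a) ^ s by ring,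
          abs_of_nonneg (by linarith)]
      rw [habs]
      have h1 : (-b - -a) ^ s + (-a) ^ s ≤ (-b) ^ s := by
        have := aux_superadd (sub_nonneg.mpr hba') (neg_nonneg.mpr ha) hs
        simpa [sub_add_cancel] using this
      have : a - b = -b - -a := by ring
      rw [this]
      nlinarith [Real.rpow_nonneg (sub_nonneg.mpr hba') s]

lemma mazur_pointwise {s : ℝ} (hs : 1 ≤ s) (a b : ℝ) :
    |a - b| ^ s ≤ 2 ^ (s - 1) * |Real.sign a * |a| ^ s - Real.sign b * |b| ^ s| := by
  rcases le_total b a with h | h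
  · exact mazur_pointwise_le hs h
  · rw [abs_sub_comm a b, abs_sub_comm (Real.sign a * |a| ^ s)]
    exact mazur_pointwise_le hs h


/-- The `r`-norm on `ℝ^m`: `‖x‖_r = (∑ i, |x i| ^ r) ^ (1/r)`. -/
noncomputable def pnorm {m : ℕ} (r : ℝ) (x : Fin m → ℝ) : ℝ :=
  (∑ i, |x i| ^ r) ^ (1 / r)

/-- The Mazur map `M_{p,t}` scaled down by the factor `(p/t) * a^(p/t − 1)`:
`M(u)_i = (t/p) * a^(1 − p/t) * sign(u_i) * |u_i|^(p/t)`. -/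
noncomputable def scaledMazur {d : ℕ} (p t a : ℝ) (u : Fin d → ℝ) : Fin d → ℝ :=
  fun i => t / p * a ^ (1 - p / t) * Real.sign (u i) * |u i| ^ (p / t)

/-- If `‖z − x‖_p, ‖q − x‖_p ≤ 2 r c_p` and the scaled Mazur map `M = M_{p,t}` (scaled down
by `(p/t) * (2 r c_p)^(p/t − 1)`) satisfies `‖M(z − x) − M(q − x)‖_t ≤ c_t * r`, then
`‖z − q‖_p ≤ (p/t)^(t/p) * c_t^(t/p) * (4 c_p)^(1 − t/p) * r`. -/
theorem scaledMazur_pullback (p t r cp ct : ℝ) (ht : 1 ≤ t) (htp : t < p)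
    (hr : 0 < r) (hcp : 1 ≤ cp) (hct : 0 < ct)
    (d : ℕ) (hd : 1 ≤ d) (x z q : Fin d → ℝ)
    (hz : pnorm p (z - x) ≤ 2 * r * cp) (hq : pnorm p (q - x) ≤ 2 * r * cp)
    (h : pnorm t (scaledMazur p t (2 * r * cp) (z - x) -
        scaledMazur p t (2 * r * cp) (q - x)) ≤ ct * r) :
    pnorm p (z - q) ≤ (p / t) ^ (t / p) * ct ^ (t / p) * (4 * cp) ^ (1 - t / p) * r := by
  have ht0 : (0:ℝ) < t := lt_of_lt_of_le one_pos ht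
  have hp0 : (0:ℝ) < p := lt_trans ht0 htp
  have hcp0 : (0:ℝ) < cp := lt_of_lt_of_le one_pos hcp
  set s := p / t with hsdef
  have hs1 : 1 < s := (one_lt_div ht0).mpr htp
  have hs0 : (0:ℝ) < s := lt_trans one_pos hs1
  set a := 2 * r * cp with hadef
  have ha0 : (0:ℝ) < a := by rw [hadef]; positivity
  set w := scaledMazur p t a (z - x) - scaledMazur p t a (q - x) with hw
  set C := 2 ^ (s - 1) * (s * a ^ (s - 1)) with hC
  have hC0 : (0:ℝ) < C := by
    rw [hC]; positivity
  have hfac : s * a ^ (s - 1) * (t / p * a ^ (1 - s)) = 1 := by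
    have h1 : a ^ (s - 1) * a ^ (1 - s) = 1 := by
      rw [← Real.rpow_add ha0]; norm_num
    have h2 : s * (t / p) = 1 := by
      rw [hsdef]; field_simp
    calc s * a ^ (s - 1) * (t / p * a ^ (1 - s))
        = s * (t / p) * (a ^ (s - 1) * a ^ (1 - s)) := by ring
      _ = 1 := by rw [h1, h2, mul_one]
  have key : ∀ i, |(z - q) i| ^ p ≤ C ^ t * |w i| ^ t := by
    intro i
    set X := Real.sign ((z - x) i) * |(z - x) i| ^ s
      - Real.sign ((q - x) i) * |(q - x) i| ^ s with hXdef
    have hwi : w i = t / p * a ^ (1 - s) * X := by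
      simp only [hw, hXdef, scaledMazur, Pi.sub_apply]
      ring
    have hpos : (0:ℝ) < t / p * a ^ (1 - s) := by positivity
    have hXabs : |X| = s * a ^ (s - 1) * |w i| := by
      rw [hwi, abs_mul, abs_of_pos hpos, ← mul_assoc, hfac, one_mul]
    have heq : (z - x) i - (q - x) i = (z - q) i := by
      simp only [Pi.sub_apply]; ring
    have step1 : |(z - q) i| ^ s ≤ C * |w i| := by
      have hm := mazur_pointwise hs1.le ((z - x) i) ((q - x) i)
      rw [heq, ← hXdef, hXabs] at hm
      calc |(z - q) i| ^ s ≤ 2 ^ (s - 1) * (s * a ^ (s - 1) * |w i|) := hm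
        _ = C * |w i| := by rw [hC]; ring
    have step2 : |(z - q) i| ^ p = (|(z - q) i| ^ s) ^ t := by
      rw [← Real.rpow_mul (abs_nonneg _), hsdef, div_mul_cancel₀ p ht0.ne']
    rw [step2]
    calc (|(z - q) i| ^ s) ^ t ≤ (C * |w i|) ^ t :=
          Real.rpow_le_rpow (Real.rpow_nonneg (abs_nonneg _) _) step1 ht0.le
      _ = C ^ t * |w i| ^ t := Real.mul_rpow hC0.le (abs_nonneg _)
  have hsum : ∑ i, |(z - q) i| ^ p ≤ C ^ t * ∑ i, |w i| ^ t := by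
    rw [Finset.mul_sum]
    exact Finset.sum_le_sum fun i _ => key i
  have hS0 : (0:ℝ) ≤ ∑ i, |w i| ^ t :=
    Finset.sum_nonneg fun i _ => Real.rpow_nonneg (abs_nonneg _) _
  have hS : ∑ i, |w i| ^ t ≤ (ct * r) ^ t := by
    unfold pnorm at h
    have h2 := Real.rpow_le_rpow (Real.rpow_nonneg hS0 _) h ht0.le
    rwa [← Real.rpow_mul hS0, one_div, inv_mul_cancel₀ ht0.ne', Real.rpow_one] at h2
  have hbound : pnorm p (z - q) ≤ (C ^ t * (ct * r) ^ t) ^ (1 / p) := by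
    unfold pnorm
    apply Real.rpow_le_rpow (Finset.sum_nonneg fun i _ => Real.rpow_nonneg (abs_nonneg _) _)
    · exact le_trans hsum (mul_le_mul_of_nonneg_left hS (Real.rpow_nonneg hC0.le t))
    · positivity
  have hcr0 : (0:ℝ) < ct * r := by positivity
  have hrw1 : (C ^ t * (ct * r) ^ t) ^ (1 / p) = (C * (ct * r)) ^ (t / p) := by
    rw [← Real.mul_rpow hC0.le hcr0.le, ← Real.rpow_mul (by positivity)]
    rw [mul_one_div]
  have h4cp : (0:ℝ) < 4 * cp := by linarith
  have hA : C * (ct * r) = (4 * cp * r) ^ (s - 1) * (s * ct * r) := by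
    have h2a : (4 * cp * r : ℝ) = 2 * a := by rw [hadef]; ring
    rw [h2a, Real.mul_rpow (by norm_num) ha0.le, hC]; ring
  have hexp : (s - 1) * (t / p) = 1 - t / p := by
    rw [hsdef]
    field_simp
  have hfinal : (C * (ct * r)) ^ (t / p)
      = s ^ (t / p) * ct ^ (t / p) * (4 * cp) ^ (1 - t / p) * r := by
    rw [hA, Real.mul_rpow (Real.rpow_nonneg (by positivity) _) (by positivity),
      ← Real.rpow_mul (by positivity), hexp,
      show (4 * cp * r : ℝ) = (4 * cp) * r by ring,
      Real.mul_rpow h4cp.le hr.le,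
      Real.mul_rpow (by positivity) hr.le,
      Real.mul_rpow hs0.le hct.le]
    have hrr : r ^ (1 - t / p) * (r ^ (t / p)) = r := by
      rw [← Real.rpow_add hr]; norm_num
    calc (4 * cp) ^ (1 - t / p) * r ^ (1 - t / p) * (s ^ (t / p) * ct ^ (t / p) * r ^ (t / p))
        = s ^ (t / p) * ct ^ (t / p) * (4 * cp) ^ (1 - t / p)
          * (r ^ (1 - t / p) * r ^ (t / p)) := by ring
      _ = _ := by rw [hrr]
  rw [hrw1, hfinal] at hbound
  exact hbound
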